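/- Let C : ℝ^m → ℝ^m satisfy ‖C(v) − v‖² ≤ (1−α)‖v‖² for all v ∈ ℝ^m, where α ∈ (0,1]. Fix h, h', G ∈ ℝ^m and set G' = G + C(h' − G). Then for every ε > 0, ‖G' − h'‖² ≤ (1−α)(1+ε)‖G − h‖² + (1−α)(1+ε^{−1})‖h' − h‖². -/
import Mathlib

/-- **Deterministic one-step core of Lemma 2 (recursive distortion bound).**
If `C` is a deterministic contractive compressor with parameter `α ∈ (0,1]` and
`G' = G + C (h' - G)` is the EF21 error-feedback update, then for every `ε > 0`,
`‖G' - h'‖² ≤ (1-α)(1+ε)‖G - h‖² + (1-α)(1+ε⁻¹)‖h' - h‖²`. -/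
theorem ef21_one_step_deterministic
    (m : ℕ) (α : ℝ) (hα : α ∈ Set.Ioc (0 : ℝ) 1)
    (C : EuclideanSpace ℝ (Fin m) → EuclideanSpace ℝ (Fin m))
    (hC : ∀ v : EuclideanSpace ℝ (Fin m), ‖C v - v‖ ^ 2 ≤ (1 - α) * ‖v‖ ^ 2)
    (h h' G : EuclideanSpace ℝ (Fin m))
    (ε : ℝ) (hε : 0 < ε) :
    ‖(G + C (h' - G)) - h'‖ ^ 2
      ≤ (1 - α) * (1 + ε) * ‖G - h‖ ^ 2 + (1 - α) * (1 + ε⁻¹) * ‖h' - h‖ ^ 2 := by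
  have h1 : (G + C (h' - G)) - h' = C (h' - G) - (h' - G) := by abel
  have h2 := hC (h' - G)
  have h3 : h' - G = (h' - h) + (h - G) := by abel
  have hy : ‖h' - G‖ ^ 2 ≤ (1 + ε) * ‖h - G‖ ^ 2 + (1 + ε⁻¹) * ‖h' - h‖ ^ 2 := by
    rw [h3]
    have htri := norm_add_le (h' - h) (h - G)
    have h4 : (0:ℝ) ≤ ‖(h' - h) + (h - G)‖ := norm_nonneg _
    have h5 : (0:ℝ) ≤ ‖h' - h‖ := norm_nonneg _
    have h6 : (0:ℝ) ≤ ‖h - G‖ := norm_nonneg _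
    have key : 2 * ‖h' - h‖ * ‖h - G‖ ≤ ε * ‖h - G‖ ^ 2 + ε⁻¹ * ‖h' - h‖ ^ 2 := by
      have hnn := mul_nonneg (inv_pos.mpr hε).le (sq_nonneg (ε * ‖h - G‖ - ‖h' - h‖))
      have h7 : ε⁻¹ * (ε * ‖h - G‖ - ‖h' - h‖) ^ 2
          = ε * ‖h - G‖ ^ 2 - 2 * ‖h' - h‖ * ‖h - G‖ + ε⁻¹ * ‖h' - h‖ ^ 2 := by
        field_simp; ring
      linarith [h7 ▸ hnn]
    have hn : ‖h' - h + (h - G)‖ ^ 2 ≤ (‖h' - h‖ + ‖h - G‖) ^ 2 :=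
      pow_le_pow_left₀ h4 htri 2
    nlinarith [key, hn]
  have h1α : 0 ≤ 1 - α := by linarith [hα.2]
  have hGh : ‖h - G‖ = ‖G - h‖ := by rw [← neg_sub, norm_neg]
  rw [h1]
  calc ‖C (h' - G) - (h' - G)‖ ^ 2 ≤ (1 - α) * ‖h' - G‖ ^ 2 := h2
    _ ≤ (1 - α) * ((1 + ε) * ‖h - G‖ ^ 2 + (1 + ε⁻¹) * ‖h' - h‖ ^ 2) := by
        exact mul_le_mul_of_nonneg_left hy h1α
    _ = (1 - α) * (1 + ε) * ‖G - h‖ ^ 2 + (1 - α) * (1 + ε⁻¹) * ‖h' - h‖ ^ 2 := by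
        rw [hGh]; ring
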